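/- Let z* ∈ Δ have z*_{j} = 1/k for j in a set S of size k (with 2 ≤ k ≤ d) and z*_j = 0 otherwise. Then the Jacobian DF(z*) of F(z) = −z + π(z) has eigenvalues −1 with multiplicity d − k + 1 and α − 1 with multiplicity k − 1. In particular, for α > 1 every such equilibrium is linearly unstable. -/

import Mathlib

open Finset Polynomial

lemma aux_det {K : Type*} [Field K] {ι : Type*} [Fintype ι] [DecidableEq ι] [Nonempty ι]
    (a b : K) (ha : a ≠ 0) :
    (a • (1 : Matrix ι ι K) + b • Matrix.of fun _ _ => (1 : K)).det
      = a ^ (Fintype.card ι - 1) * (a + (Fintype.card ι : K) * b) := by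
  have h1 : a • (1 : Matrix ι ι K) + b • Matrix.of (fun _ _ => (1 : K))
      = a • (1 + Matrix.replicateCol Unit (fun _ => b / a) * Matrix.replicateRow Unit (fun _ => (1 : K))) := by
    ext i j
    by_cases h : i = j <;>
      simp [Matrix.mul_apply, Matrix.one_apply, h, Matrix.replicateCol, Matrix.replicateRow, mul_add,
        mul_div_cancel₀ _ ha]
  rw [h1, Matrix.det_smul, Matrix.det_one_add_replicateCol_mul_replicateRow]
  obtain ⟨m, hm⟩ : ∃ m, Fintype.card ι = m + 1 :=
    ⟨Fintype.card ι - 1, (Nat.succ_pred_eq_of_pos Fintype.card_pos).symm⟩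
  rw [hm]
  simp only [Nat.add_sub_cancel, dotProduct, Finset.sum_const, Finset.card_univ, hm,
    nsmul_eq_mul, one_mul]
  field_simp
  ring

lemma aux_charpoly {ι : Type*} [Fintype ι] [DecidableEq ι] [Nonempty ι] (c t : ℝ) :
    (Matrix.of fun i j : ι => (if i = j then c else 0) + t).charpoly
      = (X - C c) ^ (Fintype.card ι - 1) * (X - C (c + (Fintype.card ι : ℝ) * t)) := by
  set K := FractionRing (Polynomial ℝ)
  set f := algebraMap (Polynomial ℝ) K with hf
  have hinj : Function.Injective f := IsFractionRing.injective _ _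
  apply hinj
  have ha : f (X - C c) ≠ 0 := by
    intro h
    exact X_sub_C_ne_zero c (hinj (by simpa using h))
  rw [Matrix.charpoly, RingHom.map_det, RingHom.mapMatrix_apply]
  have hmat : ((Matrix.of fun i j : ι => (if i = j then c else 0) + t).charmatrix).map f
      = f (X - C c) • (1 : Matrix ι ι K) + f (-C t) • Matrix.of fun _ _ => (1 : K) := by
    ext i j
    by_cases h : i = j
    · subst h
      rw [Matrix.map_apply, Matrix.charmatrix_apply_eq]
      simp only [Matrix.add_apply, Matrix.smul_apply, Matrix.one_apply_eq, Matrix.of_apply,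
        smul_eq_mul, mul_one, if_pos rfl, ← map_add]
      congr 1
      simp only [if_true, C_add]
      ring
    · rw [Matrix.map_apply, Matrix.charmatrix_apply_ne _ _ _ h]
      simp only [Matrix.add_apply, Matrix.smul_apply, Matrix.one_apply_ne h, Matrix.of_apply,
        smul_eq_mul, mul_zero, mul_one, zero_add, if_neg h]
  rw [hmat, aux_det _ _ ha]
  have hpoly : X - C (c + (Fintype.card ι : ℝ) * t)
      = X - C c + (Fintype.card ι : ℝ[X]) * (-C t) := by
    rw [C_add, C_mul, C_eq_natCast]
    ring
  rw [map_mul, hpoly, map_add, map_mul, map_natCast, map_pow]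


/-- Let `z*` put mass `1/k` on each vertex of a set `S` of size `k` (`2 ≤ k ≤ d`) and `0`
elsewhere. Then the Jacobian matrix `DF(z*)` of `F(z)_i = -z_i + z_i^α / ∑_j z_j^α` has
eigenvalues `-1` with algebraic multiplicity `d - k + 1` and `α - 1` with algebraic
multiplicity `k - 1` (expressed via the characteristic polynomial); in particular `α - 1 > 0`
for `α > 1`, so every such equilibrium is linearly unstable. -/
theorem jacobian_at_unstable_equilibrium (d : ℕ) (hd : 2 ≤ d) (α : ℝ) (hα : 1 < α)
    (S : Finset (Fin d)) (k : ℕ) (hk : S.card = k) (hk2 : 2 ≤ k)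
    (F : (Fin d → ℝ) → (Fin d → ℝ))
    (hF : ∀ z : Fin d → ℝ, ∀ i, F z i = -(z i) + z i ^ α / (∑ j, z j ^ α))
    (zstar : Fin d → ℝ) (hzstar : ∀ i, zstar i = if i ∈ S then (1 : ℝ) / k else 0)
    (DF : Matrix (Fin d) (Fin d) ℝ)
    (hDF : ∀ i j, DF i j = fderiv ℝ (fun z : Fin d → ℝ => F z i) zstar (Pi.single j 1)) :
    DF.charpoly = (X + C 1) ^ (d - k + 1) * (X - C (α - 1)) ^ (k - 1) ∧ 0 < α - 1 := by
  have hα1 : (0:ℝ) < α - 1 := by linarith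
  refine ⟨?_, hα1⟩
  classical
  have hkd : k ≤ d := by
    calc k = S.card := hk.symm
      _ ≤ Fintype.card (Fin d) := S.card_le_univ
      _ = d := Fintype.card_fin d
  have hkR : (0:ℝ) < (k:ℝ) := by
    have : 0 < k := by omega
    exact_mod_cast this
  set c : ℝ := 1 / k with hcdef
  have hcpos : 0 < c := by positivity
  have hαne : α ≠ 0 := by linarith
  have hα1ne : α - 1 ≠ 0 := by linarith
  set s : ℝ := ∑ j, zstar j ^ α with hsdef
  have hzpow : ∀ j, zstar j ^ α = if j ∈ S then c ^ α else 0 := by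
    intro j; rw [hzstar j]
    split_ifs with h
    · rfl
    · exact Real.zero_rpow hαne
  have hzpow1 : ∀ j, zstar j ^ (α - 1) = if j ∈ S then c ^ (α - 1) else 0 := by
    intro j; rw [hzstar j]
    split_ifs with h
    · rfl
    · exact Real.zero_rpow hα1ne
  have hs_val : s = k * c ^ α := by
    rw [hsdef]
    simp only [hzpow]
    rw [Finset.sum_ite_mem, Finset.univ_inter, Finset.sum_const, hk, nsmul_eq_mul]
  have hceq : c ^ α = c ^ (α - 1) * c := by
    conv_lhs => rw [show α = (α - 1) + 1 by ring]
    rw [Real.rpow_add hcpos, Real.rpow_one]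
  have hkc : (k:ℝ) * c = 1 := by
    rw [hcdef]; field_simp
  have hseq : s = c ^ (α - 1) := by
    rw [hs_val, hceq, show (k:ℝ) * (c ^ (α - 1) * c) = (k:ℝ) * c * c ^ (α - 1) from by ring,
      hkc, one_mul]
  have hspos : 0 < s := hseq ▸ Real.rpow_pos_of_pos hcpos _
  have hs0 : s ≠ 0 := ne_of_gt hspos
  -- derivatives
  have hproj : ∀ j : Fin d, HasFDerivAt (fun z : Fin d → ℝ => z j)
      (ContinuousLinearMap.proj j : (Fin d → ℝ) →L[ℝ] ℝ) zstar :=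
    fun j => hasFDerivAt_apply j zstar
  set L : Fin d → (Fin d → ℝ) →L[ℝ] ℝ :=
    fun j => (α * zstar j ^ (α - 1)) • (ContinuousLinearMap.proj j : (Fin d → ℝ) →L[ℝ] ℝ)
    with hLdef
  have h1 : ∀ j, HasFDerivAt (fun z : Fin d → ℝ => z j ^ α) (L j) zstar := fun j =>
    HasFDerivAt.rpow_const (hproj j) (Or.inr hα.le)
  have hsum : HasFDerivAt (fun z : Fin d → ℝ => ∑ j, z j ^ α) (∑ j, L j) zstar :=
    HasFDerivAt.fun_sum fun j _ => h1 j
  have hinv : HasFDerivAt (fun z : Fin d → ℝ => (∑ j, z j ^ α)⁻¹)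
      ((-(s ^ 2)⁻¹) • ∑ j, L j) zstar :=
    (hasDerivAt_inv hs0).comp_hasFDerivAt zstar hsum
  have hfd : ∀ i : Fin d, HasFDerivAt (fun z : Fin d → ℝ => F z i)
      (-(ContinuousLinearMap.proj i : (Fin d → ℝ) →L[ℝ] ℝ)
        + ((zstar i ^ α) • ((-(s ^ 2)⁻¹) • ∑ j, L j) + s⁻¹ • L i)) zstar := by
    intro i
    have hFi : (fun z : Fin d → ℝ => F z i)
        = fun z : Fin d → ℝ => -(z i) + z i ^ α * (∑ j, z j ^ α)⁻¹ := by
      funext z; rw [hF z i, div_eq_mul_inv]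
    rw [hFi]
    exact ((hproj i).neg).add ((h1 i).mul hinv)
  have hDFval : ∀ i j, DF i j =
      -((Pi.single j 1 : Fin d → ℝ) i) + ((zstar i ^ α) * (-(s ^ 2)⁻¹ * (α * zstar j ^ (α - 1)))
        + s⁻¹ * (α * zstar i ^ (α - 1) * (Pi.single j 1 : Fin d → ℝ) i)) := by
    intro i j
    rw [hDF i j, (hfd i).fderiv]
    simp only [ContinuousLinearMap.add_apply, ContinuousLinearMap.neg_apply,
      ContinuousLinearMap.smul_apply, ContinuousLinearMap.coe_sum', Finset.sum_apply,
      hLdef, ContinuousLinearMap.proj_apply, smul_eq_mul]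
    have hsum1 : ∑ x : Fin d, α * zstar x ^ (α - 1) * (Pi.single j 1 : Fin d → ℝ) x
        = α * zstar j ^ (α - 1) := by
      simp [Pi.single_apply]
    rw [hsum1]
  have hM : ∀ i j, DF i j =
      if i ∈ S ∧ j ∈ S then ((if i = j then α - 1 else 0) + (-(α * c)))
      else (if i = j then (-1:ℝ) else 0) := by
    intro i j
    rw [hDFval i j, hzpow i, hzpow1 i, hzpow1 j, hceq, ← hseq]
    by_cases hij : i = j
    · subst hij
      rw [Pi.single_eq_same]
      by_cases hiS : i ∈ S
      · simp only [hiS, and_self, if_true, if_pos rfl]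
        field_simp
        ring
      · simp only [hiS, and_self, if_false]
        norm_num
    · rw [Pi.single_eq_of_ne hij]
      by_cases hiS : i ∈ S <;> by_cases hjS : j ∈ S <;>
        simp only [hiS, hjS, and_self, and_true, true_and, false_and, and_false, if_true,
          if_false, if_neg hij] <;>
        field_simp <;> ring
  -- matrix block structure
  haveI hne : Nonempty {x // x ∈ S} := by
    obtain ⟨x, hx⟩ := Finset.card_pos.mp (by omega : 0 < S.card)
    exact ⟨⟨x, hx⟩⟩
  set A : Matrix {x // x ∈ S} {x // x ∈ S} ℝ :=
    Matrix.of (fun i j => (if i = j then α - 1 else 0) + (-(α * c))) with hAdef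
  set B : Matrix {x // x ∉ S} {x // x ∉ S} ℝ := (-1 : Matrix {x // x ∉ S} {x // x ∉ S} ℝ) with hBdef
  set e : {x // x ∈ S} ⊕ {x // x ∉ S} ≃ Fin d := Equiv.sumCompl (· ∈ S) with hedef
  have hcardS : Fintype.card {x // x ∈ S} = k := by
    rw [Fintype.card_coe, hk]
  have hcardSc : Fintype.card {x // x ∉ S} = d - k := by
    rw [Fintype.card_subtype_compl, Fintype.card_fin, hcardS]
  have hre : Matrix.reindex e.symm e.symm DF = Matrix.fromBlocks A 0 0 B := by
    ext i j
    have happ : ∀ i' j', (Matrix.reindex e.symm e.symm DF) i' j' = DF (e i') (e j') := by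
      intro i' j'
      simp [Matrix.reindex_apply, Matrix.submatrix_apply]
    cases i with
    | inl i =>
      cases j with
      | inl j =>
        rw [happ, hM]
        simp only [hedef, Equiv.sumCompl_apply_inl, Matrix.fromBlocks_apply₁₁, hAdef,
          Matrix.of_apply]
        rw [if_pos ⟨i.2, j.2⟩]
        simp [Subtype.coe_inj]
      | inr j =>
        rw [happ, hM]
        simp only [hedef, Equiv.sumCompl_apply_inl, Equiv.sumCompl_apply_inr,
          Matrix.fromBlocks_apply₁₂, Matrix.zero_apply]
        rw [if_neg (fun h => j.2 h.2), if_neg (fun h : (i:Fin d) = (j:Fin d) => j.2 (by rw [← h]; exact i.2))]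
    | inr i =>
      cases j with
      | inl j =>
        rw [happ, hM]
        simp only [hedef, Equiv.sumCompl_apply_inl, Equiv.sumCompl_apply_inr,
          Matrix.fromBlocks_apply₂₁, Matrix.zero_apply]
        rw [if_neg (fun h => i.2 h.1), if_neg (fun h : (i:Fin d) = (j:Fin d) => i.2 (by rw [h]; exact j.2))]
      | inr j =>
        rw [happ, hM]
        simp only [hedef, Equiv.sumCompl_apply_inr, Matrix.fromBlocks_apply₂₂, hBdef,
          Matrix.neg_apply, Matrix.one_apply]
        rw [if_neg (fun h => i.2 h.1)]
        by_cases h : i = j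
        · rw [if_pos (by rw [h]), if_pos h]
        · rw [if_neg (fun hc => h (Subtype.coe_inj.mp hc)), if_neg h]
          norm_num
  have hsplit : DF.charpoly = A.charpoly * B.charpoly := by
    rw [← Matrix.charpoly_reindex e.symm DF, hre, Matrix.charpoly_fromBlocks_zero₁₂]
  have hA : A.charpoly = (X - C (α - 1)) ^ (k - 1) * (X + C 1) := by
    rw [hAdef, aux_charpoly, hcardS]
    have h2 : (α - 1) + (k:ℝ) * (-(α * c)) = -1 := by
      have : (k:ℝ) * (α * c) = α := by
        rw [show (k:ℝ) * (α * c) = α * ((k:ℝ) * c) from by ring, hkc, mul_one]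
      linarith [this]
    rw [h2]
    congr 1
    rw [map_neg, sub_neg_eq_add]
  have hB : B.charpoly = (X + C 1) ^ (d - k) := by
    have hcm : Matrix.charmatrix B = ((X + C 1 : ℝ[X])) • (1 : Matrix {x // x ∉ S} {x // x ∉ S} ℝ[X]) := by
      ext i j
      by_cases h : i = j
      · subst h
        rw [Matrix.charmatrix_apply_eq, Matrix.smul_apply, Matrix.one_apply_eq, smul_eq_mul,
          mul_one]
        have hBii : B i i = -1 := by simp [hBdef]
        rw [hBii, map_neg, map_one, sub_neg_eq_add]
      · rw [Matrix.charmatrix_apply_ne _ _ _ h, Matrix.smul_apply, Matrix.one_apply_ne h,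
          smul_zero]
        have hBij : B i j = 0 := by simp [hBdef, Matrix.one_apply_ne h]
        rw [hBij, map_zero, neg_zero]
    calc B.charpoly = (Matrix.charmatrix B).det := rfl
      _ = (X + C 1) ^ (d - k) := by
          rw [hcm, Matrix.det_smul, Matrix.det_one, mul_one, hcardSc]
  rw [hsplit, hA, hB, show d - k + 1 = (d - k) + 1 from rfl, pow_succ]
  ring
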